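/- Let g : ℝ → ℝ be the odd function with g(0)=0, g'(t)=(1+2g(t)^2)^(-1/2) for t ≥ 0. For p > 1 and any v, w > 0 and t > 1, g(v + t w)^(p+1) ≥ t^((p+1)/2) · g(v/t + w)^(p+1). -/

import Mathlib

theorem stmt_14 (g : ℝ → ℝ) (hg0 : g 0 = 0)
    (hgd : ∀ t : ℝ, 0 ≤ t → HasDerivAt g (1 / Real.sqrt (1 + 2 * g t ^ 2)) t)
    (hodd : ∀ t : ℝ, g (-t) = - g t)
    (p : ℝ) (hp : 1 < p) :
    ∀ v w t : ℝ, 0 < v → 0 < w → 1 < t →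
      t ^ ((p + 1) / 2) * g (v / t + w) ^ (p + 1) ≤ g (v + t * w) ^ (p + 1) := by
  -- g is continuous on [0,∞)
  have hcont : ContinuousOn g (Set.Ici 0) := fun x hx =>
    (hgd x hx).continuousAt.continuousWithinAt
  -- g is monotone on [0,∞)
  have hmono : MonotoneOn g (Set.Ici 0) := by
    apply monotoneOn_of_deriv_nonneg (convex_Ici 0) hcont
    · intro x hx
      rw [interior_Ici] at hx
      exact (hgd x hx.le).differentiableAt.differentiableWithinAt
    · intro x hx
      rw [interior_Ici] at hx
      rw [(hgd x hx.le).deriv]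
      positivity
  have hgnn : ∀ x : ℝ, 0 ≤ x → 0 ≤ g x := fun x hx => hg0 ▸ hmono Set.self_mem_Ici hx hx
  -- monotonicity of a ↦ a / sqrt (1 + 2 a^2) on [0, ∞)
  have phi_mono : ∀ a b : ℝ, 0 ≤ a → a ≤ b →
      a / Real.sqrt (1 + 2 * a ^ 2) ≤ b / Real.sqrt (1 + 2 * b ^ 2) := by
    intro a b ha hab
    have hA : (0:ℝ) < Real.sqrt (1 + 2 * a ^ 2) := Real.sqrt_pos.2 (by positivity)
    have hB : (0:ℝ) < Real.sqrt (1 + 2 * b ^ 2) := Real.sqrt_pos.2 (by positivity)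
    rw [div_le_div_iff₀ hA hB]
    have hA2 : Real.sqrt (1 + 2 * a ^ 2) ^ 2 = 1 + 2 * a ^ 2 :=
      Real.sq_sqrt (by positivity)
    have hB2 : Real.sqrt (1 + 2 * b ^ 2) ^ 2 = 1 + 2 * b ^ 2 :=
      Real.sq_sqrt (by positivity)
    nlinarith [sq_nonneg (a * Real.sqrt (1 + 2 * b ^ 2) - b * Real.sqrt (1 + 2 * a ^ 2)),
      mul_nonneg ha hB.le, mul_nonneg (ha.trans hab) hA.le, sq_nonneg (b - a)]
  -- key inequality: g(t s)^2 ≥ t g(s)^2 for t ≥ 1, s ≥ 0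
  have key : ∀ t s : ℝ, 1 ≤ t → 0 ≤ s → t * g s ^ 2 ≤ g (t * s) ^ 2 := by
    intro t s ht hs
    have ht0 : (0:ℝ) < t := lt_of_lt_of_le one_pos ht
    set F : ℝ → ℝ := fun x => g (t * x) ^ 2 - t * g x ^ 2 with hF
    have hFd : ∀ x : ℝ, 0 ≤ x → HasDerivAt F
        ((2:ℕ) * g (t * x) ^ 1 * ((1 / Real.sqrt (1 + 2 * g (t * x) ^ 2)) * t)
          - t * ((2:ℕ) * g x ^ 1 * (1 / Real.sqrt (1 + 2 * g x ^ 2)))) x := by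
      intro x hx
      have h1 : HasDerivAt (fun y : ℝ => t * y) t x := by
        simpa using (hasDerivAt_id x).const_mul t
      have h2 : HasDerivAt (fun y : ℝ => g (t * y))
          ((1 / Real.sqrt (1 + 2 * g (t * x) ^ 2)) * t) x :=
        (hgd (t * x) (by positivity)).comp x h1
      exact ((h2.pow 2).sub (((hgd x hx).pow 2).const_mul t))
    have hFmono : MonotoneOn F (Set.Ici 0) := by
      apply monotoneOn_of_deriv_nonneg (convex_Ici 0)
      · exact fun x hx => (hFd x hx).continuousAt.continuousWithinAt
      · intro x hx
        rw [interior_Ici] at hx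
        exact (hFd x hx.le).differentiableAt.differentiableWithinAt
      · intro x hx
        rw [interior_Ici] at hx
        rw [(hFd x hx.le).deriv]
        have hgx : 0 ≤ g x := hgnn x hx.le
        have hle : g x ≤ g (t * x) := hmono (Set.mem_Ici.2 (le_of_lt hx)) (Set.mem_Ici.2 (mul_nonneg ht0.le (le_of_lt hx))) (by nlinarith [mul_nonneg (sub_nonneg.2 ht) (le_of_lt hx)])
        have hphi := phi_mono (g x) (g (t * x)) hgx hle
        have h2t : 0 ≤ 2 * t * (g (t * x) / Real.sqrt (1 + 2 * g (t * x) ^ 2)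
            - g x / Real.sqrt (1 + 2 * g x ^ 2)) :=
          mul_nonneg (by linarith) (sub_nonneg.2 hphi)
        have : ((2:ℕ):ℝ) = 2 := by norm_num
        rw [this]
        ring_nf
        ring_nf at h2t
        linarith
    have h0 : F 0 = 0 := by simp [hF, hg0]
    have := hFmono Set.self_mem_Ici (Set.mem_Ici.2 hs) hs
    rw [h0] at this
    simpa [hF, sub_nonneg] using this
  -- conclude
  intro v w t hv hw ht
  have ht0 : (0:ℝ) < t := lt_trans one_pos ht
  set s : ℝ := v / t + w with hsdef
  have hs : 0 < s := by positivity
  have hts : v + t * w = t * s := by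
    rw [hsdef]; field_simp
  have hkey := key t s ht.le hs.le
  have hgs : 0 ≤ g s := hgnn s hs.le
  have hgts : 0 ≤ g (t * s) := hgnn _ (by positivity)
  have hsq : ∀ x : ℝ, 0 ≤ x → (x ^ 2) ^ ((p + 1) / 2) = x ^ (p + 1) := by
    intro x hx
    rw [← Real.rpow_natCast x 2, ← Real.rpow_mul hx]
    congr 1; ring
  rw [hts]
  calc t ^ ((p + 1) / 2) * g s ^ (p + 1)
      = (t * g s ^ 2) ^ ((p + 1) / 2) := by
        rw [Real.mul_rpow ht0.le (by positivity), hsq _ hgs]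
    _ ≤ (g (t * s) ^ 2) ^ ((p + 1) / 2) :=
        Real.rpow_le_rpow (by positivity) hkey (by linarith)
    _ = g (t * s) ^ (p + 1) := hsq _ hgts
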